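/- If G ≠ K_5 is a 5-Ore graph, then T(G) ≥ 2 + (|V(G)|−1)/4. -/

import Mathlib

open SimpleGraph

namespace Postle

noncomputable def epsC : ℝ := 1 / 21
noncomputable def delC : ℝ := 8 / 21
noncomputable def PC : ℝ := 48 / 21
noncomputable def QC : ℝ := 8 / 21

/-- The degree of a vertex, via the cardinality of its neighbor set. -/
noncomputable def degS {V : Type} (G : SimpleGraph V) (v : V) : ℕ :=
  (G.neighborSet v).ncard

/-- A graph is 5-critical if it is not 4-colorable but every proper subgraph is. -/
def FiveCritical {V : Type} (G : SimpleGraph V) : Prop :=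
  ¬ G.Colorable 4 ∧ ∀ H : SimpleGraph V, H < G → H.Colorable 4

/-- `G` is (isomorphic to) the complete graph `K₅`. -/
def IsK5 {V : Type} (G : SimpleGraph V) : Prop :=
  Nonempty (G ≃g (⊤ : SimpleGraph (Fin 5)))

/-- `T(G)`: the maximum, over collections of pairwise disjoint cliques of size 3 or 4 in `G`,
of (number of 3-cliques) + 2 * (number of 4-cliques); each clique of size `k` contributes
`k - 2`. -/
noncomputable def TT {V : Type} (G : SimpleGraph V) : ℕ :=
  sSup { n : ℕ | ∃ C : Finset (Finset V),
    ((C : Set (Finset V)).Pairwise fun A B => Disjoint A B) ∧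
    (∀ W ∈ C, G.IsClique (W : Set V) ∧ (W.card = 3 ∨ W.card = 4)) ∧
    n = ∑ W ∈ C, (W.card - 2) }

/-- The potential `p(G) = (9+ε)|V(G)| - 4|E(G)| - δ·T(G)` with `ε = 1/21`, `δ = 8/21`. -/
noncomputable def pot {V : Type} (G : SimpleGraph V) : ℝ :=
  (9 + epsC) * (Nat.card V : ℝ) - 4 * (G.edgeSet.ncard : ℝ) - delC * (TT G : ℝ)

/-- `p_G(R) = p(G[R])`. -/
noncomputable def potOn {V : Type} (G : SimpleGraph V) (R : Set V) : ℝ :=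
  pot (G.induce R)

/-- The Kostochka–Yancey potential `p_KY(G) = 9|V(G)| - 4|E(G)|`. -/
noncomputable def potKY {V : Type} (G : SimpleGraph V) : ℝ :=
  9 * (Nat.card V : ℝ) - 4 * (G.edgeSet.ncard : ℝ)

noncomputable def potKYOn {V : Type} (G : SimpleGraph V) (R : Set V) : ℝ :=
  potKY (G.induce R)

/-- `G` is an Ore-composition of `G₁` (the edge side, with replaced edge `xy`) and `G₂`
(the vertex side, with split vertex `z`): delete the edge `xy` of `G₁`, split `z` into two
vertices of positive degree, and identify them with `x` and `y`. The set `S` records which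
neighbors of `z` get attached to `x`. -/
def IsOreComposition {V V₁ V₂ : Type} (G : SimpleGraph V)
    (G₁ : SimpleGraph V₁) (G₂ : SimpleGraph V₂) : Prop :=
  ∃ (x y : V₁) (z : V₂) (f₁ : V₁ ↪ V) (f₂ : {w : V₂ // w ≠ z} ↪ V) (S : Set V₂),
    G₁.Adj x y ∧
    (∀ w ∈ S, G₂.Adj z w) ∧ S.Nonempty ∧ (G₂.neighborSet z \ S).Nonempty ∧
    Set.range ⇑f₁ ∩ Set.range ⇑f₂ = ∅ ∧
    Set.range ⇑f₁ ∪ Set.range ⇑f₂ = Set.univ ∧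
    ∀ a b : V, G.Adj a b ↔
      ((∃ a' b' : V₁, f₁ a' = a ∧ f₁ b' = b ∧ G₁.Adj a' b' ∧
          ¬(a' = x ∧ b' = y) ∧ ¬(a' = y ∧ b' = x)) ∨
       (∃ a' b' : {w : V₂ // w ≠ z}, f₂ a' = a ∧ f₂ b' = b ∧ G₂.Adj a'.1 b'.1) ∨
       (∃ w : {w : V₂ // w ≠ z}, G₂.Adj z w.1 ∧
         ((((a = f₁ x ∧ b = f₂ w) ∨ (b = f₁ x ∧ a = f₂ w)) ∧ w.1 ∈ S) ∨
          (((a = f₁ y ∧ b = f₂ w) ∨ (b = f₁ y ∧ a = f₂ w)) ∧ w.1 ∉ S))))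

/-- A graph is 5-Ore if it can be obtained from copies of `K₅` by repeated Ore-compositions. -/
inductive Is5Ore : {V : Type} → SimpleGraph V → Prop
  | k5 {V : Type} {G : SimpleGraph V} (h : IsK5 G) : Is5Ore G
  | ore {V V₁ V₂ : Type} {G : SimpleGraph V} {G₁ : SimpleGraph V₁} {G₂ : SimpleGraph V₂}
      (h₁ : Is5Ore G₁) (h₂ : Is5Ore G₂) (h : IsOreComposition G G₁ G₂) : Is5Ore G

/-- The boundary of `R`: the vertices of `R` with a neighbor outside `R`. -/
def boundary {V : Type} (G : SimpleGraph V) (R : Set V) : Set V :=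
  {v : V | v ∈ R ∧ ∃ w, w ∉ R ∧ G.Adj v w}

/-- The graph `G + uv` obtained by adding the edge `uv`. -/
noncomputable def addEdge {α : Type} (G : SimpleGraph α) (u v : α) : SimpleGraph α :=
  G ⊔ SimpleGraph.fromEdgeSet {s(u, v)}

/-- `R` is an Ore-collapsible subset of `G`: a proper subset whose boundary consists of exactly
two non-adjacent vertices `u, v` such that `G[R] + uv` is 5-Ore. -/
def OreCollapsible {V : Type} (G : SimpleGraph V) (R : Set V) : Prop :=
  R ≠ Set.univ ∧ ∃ u v : ↥R, u.1 ≠ v.1 ∧ ¬ G.Adj u.1 v.1 ∧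
    boundary G R = {u.1, v.1} ∧ Is5Ore (addEdge (G.induce R) u v)

/-- An emerald: a subgraph isomorphic to `K₄` all of whose vertices have degree 4 in `G`,
given by its vertex set. -/
def IsEmerald {V : Type} (G : SimpleGraph V) (S : Set V) : Prop :=
  S.ncard = 4 ∧ (∀ a ∈ S, ∀ b ∈ S, a ≠ b → G.Adj a b) ∧ ∀ v ∈ S, degS G v = 4

/-- A diamond: a subgraph isomorphic to `K₅ - e` in which the vertices not incident to `e`
have degree 4 in `G`, given by its vertex set. -/
def IsDiamond {V : Type} (G : SimpleGraph V) (D : Set V) : Prop :=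
  D.ncard = 5 ∧ ∃ u ∈ D, ∃ v ∈ D, u ≠ v ∧
    (∀ a ∈ D, ∀ b ∈ D, a ≠ b → ¬(a = u ∧ b = v) → ¬(a = v ∧ b = u) → G.Adj a b) ∧
    ∀ w ∈ D, w ≠ u → w ≠ v → degS G w = 4

/-- A graph is ungemmed if it contains neither a diamond nor an emerald. -/
def Ungemmed {V : Type} (G : SimpleGraph V) : Prop :=
  (¬ ∃ D : Set V, IsDiamond G D) ∧ ¬ ∃ S : Set V, IsEmerald G S

/-- `R` is collapsible: a proper subset with `|R| ≥ 5` such that in every proper 4-coloring of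
`G[R]` all boundary vertices of `R` receive the same color. -/
def Collapsible {V : Type} (G : SimpleGraph V) (R : Set V) : Prop :=
  R ≠ Set.univ ∧ 5 ≤ R.ncard ∧
    ∀ φ : (G.induce R).Coloring (Fin 4), ∀ u v : ↥R,
      u.1 ∈ boundary G R → v.1 ∈ boundary G R → φ u = φ v

/-- The critical complement of a collapsible set `R`: identify the boundary of `R` to a single
new vertex (`none`) and delete the rest of `R`. -/
noncomputable def criticalComplement {V : Type} (G : SimpleGraph V) (R : Set V) :
    SimpleGraph (Option ↥(Rᶜ)) :=
  SimpleGraph.fromRel fun a b =>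
    match a, b with
    | some w, some w' => G.Adj w.1 w'.1
    | none, some w => ∃ x ∈ boundary G R, G.Adj x w.1
    | _, _ => False

/-- The φ-identification `G_φ(R)`: vertices outside `R` together with four vertices `x_i`;
the vertices of `R` colored `i` are identified to `x_i`, and all edges `x_i x_j` are added. -/
noncomputable def phiIdent {V : Type} (G : SimpleGraph V) (R : Set V) (φ : ↥R → Fin 4) :
    SimpleGraph ((↥(Rᶜ)) ⊕ Fin 4) :=
  SimpleGraph.fromRel fun a b =>
    match a, b with
    | Sum.inl w, Sum.inl w' => G.Adj w.1 w'.1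
    | Sum.inl w, Sum.inr i => ∃ r : ↥R, φ r = i ∧ G.Adj r.1 w.1
    | Sum.inr _, Sum.inr _ => True
    | _, _ => False

/-- A critical extension of `R` in `G`: a proper 4-coloring `φ` of `G[R]` together with a
5-critical subgraph `W` of the φ-identification `G_φ(R)`, with vertex set `S`. -/
structure CriticalExtension {V : Type} (G : SimpleGraph V) (R : Set V) where
  φ : (G.induce R).Coloring (Fin 4)
  S : Set ((↥(Rᶜ)) ⊕ Fin 4)
  W : SimpleGraph ↥S
  le : W ≤ (phiIdent G R ⇑φ).induce S
  crit : FiveCritical W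

/-- The critical extension `R' = (V(W) - V(X)) ∪ R` of `R`. -/
noncomputable def CriticalExtension.verts {V : Type} {G : SimpleGraph V} {R : Set V}
    (E : CriticalExtension G R) : Set V :=
  R ∪ {v : V | ∃ h : v ∈ Rᶜ, Sum.inl (⟨v, h⟩ : ↥(Rᶜ)) ∈ E.S}

/-- The size `|X|` of the core `W ∩ X` of the extension. -/
noncomputable def CriticalExtension.coreCard {V : Type} {G : SimpleGraph V} {R : Set V}
    (E : CriticalExtension G R) : ℕ :=
  {i : Fin 4 | Sum.inr i ∈ E.S}.ncard

/-- The graph `W - X` obtained from the extender `W` by deleting the core vertices. -/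
noncomputable def CriticalExtension.WminusX {V : Type} {G : SimpleGraph V} {R : Set V}
    (E : CriticalExtension G R) :=
  E.W.induce {w : ↥E.S | w.1.isLeft = true}

/-- `f(n) = (9+ε)n - 4·C(n,2)`. -/
noncomputable def fExt (n : ℕ) : ℝ := (9 + epsC) * (n : ℝ) - 4 * ((n.choose 2 : ℕ) : ℝ)

/-- The closed neighborhood of a vertex. -/
def closedNbhd {V : Type} (G : SimpleGraph V) (v : V) : Set V :=
  insert v (G.neighborSet v)

/-- A cluster: a maximal set of degree-four vertices with the same closed neighborhood. -/
def IsCluster {V : Type} (G : SimpleGraph V) (C : Set V) : Prop :=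
  C.Nonempty ∧ (∀ v ∈ C, degS G v = 4) ∧
  (∀ u ∈ C, ∀ v ∈ C, closedNbhd G u = closedNbhd G v) ∧
  ∀ C' : Set V, C ⊆ C' → (∀ v ∈ C', degS G v = 4) →
    (∀ u ∈ C', ∀ v ∈ C', closedNbhd G u = closedNbhd G v) → C' = C

open Classical in
/-- The list of cluster sizes of `G`, in decreasing order. -/
noncomputable def clusterList {V : Type} [Fintype V] (G : SimpleGraph V) : List ℕ :=
  ((((Finset.univ : Finset V).filter fun v => degS G v = 4).image
      fun v => (Finset.univ : Finset V).filter
        fun u => degS G u = 4 ∧ closedNbhd G u = closedNbhd G v).val.map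
    Finset.card).sort (· ≤ ·) |>.reverse

/-- `H` is smaller than `G`: fewer vertices; or the same number of vertices and more edges; or
the same number of vertices and edges and `H` precedes `G` in the lexicographic ordering of
cluster sizes listed in decreasing order. -/
def Smaller {V₁ V₂ : Type} [Fintype V₁] [Fintype V₂]
    (H : SimpleGraph V₁) (G : SimpleGraph V₂) : Prop :=
  Nat.card V₁ < Nat.card V₂ ∨
  (Nat.card V₁ = Nat.card V₂ ∧ G.edgeSet.ncard < H.edgeSet.ncard) ∨
  (Nat.card V₁ = Nat.card V₂ ∧ H.edgeSet.ncard = G.edgeSet.ncard ∧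
    List.Lex (· > ·) (clusterList H) (clusterList G))

/-- A 5-critical graph `G` is good if every smaller 5-critical graph satisfies the conclusion
of the main theorem. -/
def Good {V : Type} [Fintype V] (G : SimpleGraph V) : Prop :=
  FiveCritical G ∧
    ∀ (V' : Type) [Fintype V'] (H : SimpleGraph V'), FiveCritical H → Smaller H G →
      (IsK5 H → pot H = 5 + 5 * epsC - 2 * delC) ∧
      (Is5Ore H → ¬ IsK5 H →
        pot H ≤ 5 + (Nat.card V' : ℝ) * epsC - (2 + ((Nat.card V' : ℝ) - 1) / 4) * delC) ∧
      (¬ Is5Ore H → pot H ≤ 5 - PC)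

/-- `G` is tight if it is good and `p(G) ≥ 5 - P - Q`. -/
def Tight {V : Type} [Fintype V] (G : SimpleGraph V) : Prop :=
  Good G ∧ pot G ≥ 5 - PC - QC

/-- `u, v` is an identifiable pair in a proper subset `R`: `G[R] + uv` is not 4-colorable. -/
def IdentifiablePair {V : Type} (G : SimpleGraph V) (R : Set V) (u v : ↥R) : Prop :=
  R ≠ Set.univ ∧ ¬ (addEdge (G.induce R) u v).Colorable 4

section AuxT

/-- A valid clique collection for `TT`. -/
def GoodColl {V : Type} (G : SimpleGraph V) (C : Finset (Finset V)) : Prop :=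
  ((C : Set (Finset V)).Pairwise fun A B => Disjoint A B) ∧
  (∀ W ∈ C, G.IsClique (W : Set V) ∧ (W.card = 3 ∨ W.card = 4))

/-- The value of a clique collection. -/
def Sval {V : Type} (C : Finset (Finset V)) : ℕ := ∑ W ∈ C, (W.card - 2)

lemma sval_le_TT {V : Type} [Fintype V] (G : SimpleGraph V) {C : Finset (Finset V)}
    (h : GoodColl G C) : Sval C ≤ TT G := by
  classical
  apply le_csSup
  · refine ⟨Fintype.card V, ?_⟩
    rintro n ⟨D, hD1, hD2, rfl⟩
    calc ∑ W ∈ D, (W.card - 2) ≤ ∑ W ∈ D, W.card :=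
          Finset.sum_le_sum fun W _ => Nat.sub_le _ _
      _ = (D.biUnion id).card :=
          (Finset.card_biUnion fun A hA B hB hAB => hD1 hA hB hAB).symm
      _ ≤ Fintype.card V := Finset.card_le_univ _
  · exact ⟨C, h.1, h.2, rfl⟩

lemma finite_of_5ore {V : Type} {G : SimpleGraph V} (h : Is5Ore G) : Finite V := by
  induction h with
  | k5 h =>
    obtain ⟨e⟩ := h
    exact Finite.of_equiv (Fin 5) e.toEquiv.symm
  | ore h₁ h₂ h ih₁ ih₂ =>
    haveI := ih₁; haveI := ih₂
    obtain ⟨x, y, z, f₁, f₂, S, -, -, -, -, -, huniv, -⟩ := h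
    have hfin : (Set.range ⇑f₁ ∪ Set.range ⇑f₂).Finite :=
      (Set.finite_range ⇑f₁).union (Set.finite_range ⇑f₂)
    rw [huniv] at hfin
    exact Set.finite_univ_iff.mp hfin

lemma erase_step {V : Type} {G : SimpleGraph V} {C : Finset (Finset V)}
    (h : GoodColl G C) (v : V) :
    ∃ C', GoodColl G C' ∧ (∀ W ∈ C', v ∉ W) ∧ (Sval C : ℝ) - 1 ≤ (Sval C' : ℝ) := by
  classical
  by_cases hv : ∃ W ∈ C, v ∈ W
  · obtain ⟨W₀, hW₀, hvW₀⟩ := hv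
    have huniq : ∀ W ∈ C, v ∈ W → W = W₀ := by
      intro W hW hvW
      by_contra hne
      exact (Finset.disjoint_left.mp (h.1 hW hW₀ hne) hvW) hvW₀
    have hsum : Sval C = Sval (C.erase W₀) + (W₀.card - 2) :=
      (Finset.sum_erase_add C _ hW₀).symm
    have hgoodE : GoodColl G (C.erase W₀) :=
      ⟨h.1.mono (Finset.coe_subset.mpr (Finset.erase_subset _ _)),
       fun W hW => h.2 W (Finset.mem_of_mem_erase hW)⟩
    have havoidE : ∀ W ∈ C.erase W₀, v ∉ W := by
      intro W hW hvW
      exact (Finset.ne_of_mem_erase hW) (huniq W (Finset.mem_of_mem_erase hW) hvW)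
    rcases (h.2 W₀ hW₀).2 with h3 | h4
    · refine ⟨C.erase W₀, hgoodE, havoidE, ?_⟩
      have : Sval C = Sval (C.erase W₀) + 1 := by rw [hsum, h3]
      rw [this]; push_cast; linarith
    · set W₁ := W₀.erase v with hW₁
      have hW₁card : W₁.card = 3 := by
        rw [hW₁, Finset.card_erase_of_mem hvW₀, h4]
      have hW₁sub : W₁ ⊆ W₀ := Finset.erase_subset _ _
      have hW₁ne : W₁.Nonempty := Finset.card_pos.mp (by omega)
      have hW₁notmem : W₁ ∉ C.erase W₀ := by
        intro hmem
        have hne := Finset.ne_of_mem_erase hmem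
        have hdis := h.1 (Finset.mem_of_mem_erase hmem) hW₀ hne
        obtain ⟨a, ha⟩ := hW₁ne
        exact (Finset.disjoint_left.mp hdis ha) (hW₁sub ha)
      refine ⟨insert W₁ (C.erase W₀), ⟨?_, ?_⟩, ?_, ?_⟩
      · haveI : Std.Symm (fun A B : Finset V => Disjoint A B) := ⟨fun A B hAB => hAB.symm⟩
        rw [Finset.coe_insert,
          Set.pairwise_insert_of_symm]
        refine ⟨hgoodE.1, fun B hB hne => ?_⟩
        have hBC : B ∈ C.erase W₀ := hB
        have hdis := h.1 hW₀ (Finset.mem_of_mem_erase hBC)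
          (Ne.symm (Finset.ne_of_mem_erase hBC))
        exact Finset.disjoint_of_subset_left hW₁sub hdis
      · intro W hW
        rcases Finset.mem_insert.mp hW with rfl | hW'
        · exact ⟨(h.2 W₀ hW₀).1.subset (Finset.coe_subset.mpr hW₁sub), Or.inl hW₁card⟩
        · exact hgoodE.2 W hW'
      · intro W hW
        rcases Finset.mem_insert.mp hW with rfl | hW'
        · exact Finset.notMem_erase v W₀
        · exact havoidE W hW'
      · have hS' : Sval (insert W₁ (C.erase W₀)) = (W₁.card - 2) + Sval (C.erase W₀) :=
          Finset.sum_insert hW₁notmem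
        rw [hS', hW₁card, hsum, h4]
        push_cast; linarith
  · exact ⟨C, h, fun W hW hvW => hv ⟨W, hW, hvW⟩, by linarith⟩

lemma map_coll {V' V : Type} [DecidableEq V] {G' : SimpleGraph V'} {G : SimpleGraph V}
    {C : Finset (Finset V')} (hC : GoodColl G' C)
    (φ : V' → V) (P : V' → Prop)
    (hP : ∀ W ∈ C, ∀ a ∈ W, P a)
    (hinj : ∀ a b, P a → P b → φ a = φ b → a = b)
    (hedge : ∀ W ∈ C, ∀ a ∈ W, ∀ b ∈ W, G'.Adj a b → G.Adj (φ a) (φ b)) :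
    GoodColl G (C.image (Finset.image φ)) ∧
      Sval (C.image (Finset.image φ)) = Sval C ∧
      ∀ W ∈ C.image (Finset.image φ), ∀ u ∈ W, ∃ a, P a ∧ φ a = u := by
  classical
  have hinjW : ∀ W ∈ C, Set.InjOn φ ↑W := fun W hW a ha b hb =>
    hinj a b (hP W hW a ha) (hP W hW b hb)
  have hkey : ∀ W ∈ C, ∀ W' ∈ C, W.image φ = W'.image φ → ∀ a ∈ W, a ∈ W' := by
    intro W hW W' hW' hEq a ha
    have hmem : φ a ∈ W'.image φ := hEq ▸ Finset.mem_image_of_mem φ ha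
    obtain ⟨b, hb, hba⟩ := Finset.mem_image.mp hmem
    rwa [← hinj b a (hP W' hW' b hb) (hP W hW a ha) hba]
  have himg_inj : ∀ W ∈ C, ∀ W' ∈ C, W.image φ = W'.image φ → W = W' := by
    intro W hW W' hW' hEq
    exact Finset.Subset.antisymm (fun a ha => hkey W hW W' hW' hEq a ha)
      (fun a ha => hkey W' hW' W hW hEq.symm a ha)
  refine ⟨⟨?_, ?_⟩, ?_, ?_⟩
  · intro A hA B hB hAB
    rw [Finset.mem_coe, Finset.mem_image] at hA hB
    obtain ⟨W, hW, rfl⟩ := hA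
    obtain ⟨W', hW', rfl⟩ := hB
    have hWW' : W ≠ W' := fun hEq => hAB (by rw [hEq])
    have hdis := hC.1 hW hW' hWW'
    rw [Finset.disjoint_left]
    rintro u hu hu'
    obtain ⟨a, ha, rfl⟩ := Finset.mem_image.mp hu
    obtain ⟨b, hb, hba⟩ := Finset.mem_image.mp hu'
    have hba' : b = a := hinj b a (hP W' hW' b hb) (hP W hW a ha) hba
    exact Finset.disjoint_left.mp hdis ha (hba' ▸ hb)
  · intro A hA
    obtain ⟨W, hW, rfl⟩ := Finset.mem_image.mp hA
    refine ⟨?_, ?_⟩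
    · rw [SimpleGraph.isClique_iff]
      intro u hu w hw huw
      rw [Finset.mem_coe] at hu hw
      obtain ⟨a, ha, rfl⟩ := Finset.mem_image.mp hu
      obtain ⟨b, hb, rfl⟩ := Finset.mem_image.mp hw
      have hab : a ≠ b := fun hEq => huw (by rw [hEq])
      exact hedge W hW a ha b hb ((hC.2 W hW).1 ha hb hab)
    · rw [Finset.card_image_of_injOn (hinjW W hW)]
      exact (hC.2 W hW).2
  · rw [Sval, Sval, Finset.sum_image fun W hW W' hW' => himg_inj W hW W' hW']
    exact Finset.sum_congr rfl fun W hW => by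
      rw [Finset.card_image_of_injOn (hinjW W hW)]
  · intro W hW u hu
    obtain ⟨W', hW', rfl⟩ := Finset.mem_image.mp hW
    obtain ⟨a, ha, rfl⟩ := Finset.mem_image.mp hu
    exact ⟨a, hP W' hW' a ha, rfl⟩

lemma ore_main {V : Type} {G : SimpleGraph V} (h5 : Is5Ore G) :
    (∀ v : V, ∃ C, GoodColl G C ∧ (∀ W ∈ C, v ∉ W) ∧
        1 + ((Nat.card V : ℝ) - 1) / 4 ≤ (Sval C : ℝ)) ∧
    (∀ x y : V, G.Adj x y → ∃ C, GoodColl G C ∧ (∀ W ∈ C, ¬(x ∈ W ∧ y ∈ W)) ∧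
        1 + ((Nat.card V : ℝ) - 1) / 4 ≤ (Sval C : ℝ)) ∧
    (¬ IsK5 G → ∃ C, GoodColl G C ∧
        2 + ((Nat.card V : ℝ) - 1) / 4 ≤ (Sval C : ℝ)) := by
  induction h5 with
  | k5 hk =>
    rename_i V G
    classical
    obtain ⟨e⟩ := id hk
    haveI : Finite V := Finite.of_equiv (Fin 5) e.toEquiv.symm
    haveI : Fintype V := Fintype.ofFinite V
    have hcard : Nat.card V = 5 := by
      rw [Nat.card_congr e.toEquiv]; simp
    have hcard5 : Fintype.card V = 5 := by
      rw [← Nat.card_eq_fintype_card, hcard]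
    have hadj : ∀ a b : V, a ≠ b → G.Adj a b := by
      intro a b hab
      exact e.map_adj_iff.mp
        ((SimpleGraph.top_adj (e a) (e b)).mpr fun hEq => hab (e.toEquiv.injective hEq))
    have hkey : ∀ v : V, ∃ C, GoodColl G C ∧ (∀ W ∈ C, v ∉ W) ∧
        1 + ((Nat.card V : ℝ) - 1) / 4 ≤ (Sval C : ℝ) := by
      intro v
      refine ⟨{Finset.univ.erase v}, ⟨?_, ?_⟩, ?_, ?_⟩
      · rw [Finset.coe_singleton]
        exact Set.pairwise_singleton _ _
      · intro W hW
        rw [Finset.mem_singleton] at hW; subst hW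
        refine ⟨fun a _ b _ hne => hadj a b hne, Or.inr ?_⟩
        rw [Finset.card_erase_of_mem (Finset.mem_univ v), Finset.card_univ, hcard5]
      · intro W hW
        rw [Finset.mem_singleton] at hW; subst hW
        exact Finset.notMem_erase v _
      · have hS : Sval {Finset.univ.erase v} = (Finset.univ.erase v).card - 2 :=
          Finset.sum_singleton _ _
        rw [hS, Finset.card_erase_of_mem (Finset.mem_univ v), Finset.card_univ,
          hcard5, hcard]
        norm_num
    refine ⟨hkey, ?_, ?_⟩
    · intro a b hab
      obtain ⟨C, h1, h2, h3⟩ := hkey a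
      exact ⟨C, h1, fun W hW hm => h2 W hW hm.1, h3⟩
    · intro hnk; exact absurd hk hnk
  | ore h₁ h₂ hcomp ih₁ ih₂ =>
    rename_i V V₁ V₂ G G₁ G₂
    classical
    haveI : Finite V := finite_of_5ore (Is5Ore.ore h₁ h₂ hcomp)
    haveI : Finite V₁ := finite_of_5ore h₁
    haveI : Finite V₂ := finite_of_5ore h₂
    obtain ⟨x, y, z, f₁, f₂, S, hxy, hSadj, hSne, hSne', hdisj, huniv, hGadj⟩ := hcomp
    have hdisj' : ∀ u : V, u ∈ Set.range ⇑f₁ → u ∈ Set.range ⇑f₂ → False := by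
      intro u h1 h2
      have hm : u ∈ Set.range ⇑f₁ ∩ Set.range ⇑f₂ := ⟨h1, h2⟩
      rw [hdisj] at hm; exact hm
    have e : V₁ ⊕ {w : V₂ // w ≠ z} ≃ V := by
      refine Equiv.ofBijective (Sum.elim ⇑f₁ ⇑f₂) ⟨?_, ?_⟩
      · rintro (a | a) (b | b) hab
        · exact congrArg Sum.inl (f₁.injective hab)
        · exact (hdisj' (f₁ a) ⟨a, rfl⟩ ⟨b, hab.symm⟩).elim
        · exact (hdisj' (f₁ b) ⟨b, rfl⟩ ⟨a, hab⟩).elim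
        · exact congrArg Sum.inr (f₂.injective hab)
      · intro v
        have hv : v ∈ Set.range ⇑f₁ ∪ Set.range ⇑f₂ := by
          rw [huniv]; trivial
        rcases hv with ⟨a, rfl⟩ | ⟨a, rfl⟩
        · exact ⟨Sum.inl a, rfl⟩
        · exact ⟨Sum.inr a, rfl⟩
    have hn : (Nat.card V : ℝ) = (Nat.card V₁ : ℝ) + (Nat.card V₂ : ℝ) - 1 := by
      have h1 : Nat.card V = Nat.card V₁ + Nat.card {w : V₂ // w ≠ z} := by
        rw [← Nat.card_congr e, Nat.card_sum]
      have h2 : Nat.card V₂ = Nat.card {w : V₂ // w ≠ z} + 1 := by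
        haveI : Fintype V₂ := Fintype.ofFinite V₂
        rw [← Nat.card_congr (Equiv.optionSubtypeNe z), Nat.card_eq_fintype_card,
          Nat.card_eq_fintype_card, Fintype.card_option]
      rw [h1, h2]; push_cast; ring
    obtain ⟨C₁, hC₁good, hC₁xy, hC₁sum⟩ := ih₁.2.1 x y hxy
    obtain ⟨C₂, hC₂good, hC₂z, hC₂sum⟩ := ih₂.1 z
    set g : V₂ → V := fun w => if hw : w = z then f₁ x else f₂ ⟨w, hw⟩ with hgdef
    have hg : ∀ (w : V₂) (hw : w ≠ z), g w = f₂ ⟨w, hw⟩ := fun w hw => dif_neg hw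
    have hedge₁ : ∀ W ∈ C₁, ∀ a ∈ W, ∀ b ∈ W, G₁.Adj a b → G.Adj (f₁ a) (f₁ b) := by
      intro W hW a ha b hb hab
      refine (hGadj _ _).mpr (Or.inl ⟨a, b, rfl, rfl, hab, ?_, ?_⟩)
      · rintro ⟨rfl, rfl⟩; exact hC₁xy W hW ⟨ha, hb⟩
      · rintro ⟨rfl, rfl⟩; exact hC₁xy W hW ⟨hb, ha⟩
    have hPz : ∀ W ∈ C₂, ∀ a ∈ W, a ≠ z := by
      intro W hW a ha hEq
      exact hC₂z W hW (hEq ▸ ha)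
    have hinj₂ : ∀ a b : V₂, a ≠ z → b ≠ z → g a = g b → a = b := by
      intro a b ha hb hab
      rw [hg a ha, hg b hb] at hab
      exact congrArg Subtype.val (f₂.injective hab)
    have hedge₂ : ∀ W ∈ C₂, ∀ a ∈ W, ∀ b ∈ W, G₂.Adj a b → G.Adj (g a) (g b) := by
      intro W hW a ha b hb hab
      have ha' := hPz W hW a ha
      have hb' := hPz W hW b hb
      rw [hg a ha', hg b hb']
      exact (hGadj _ _).mpr (Or.inr (Or.inl ⟨⟨a, ha'⟩, ⟨b, hb'⟩, rfl, rfl, hab⟩))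
    obtain ⟨hgood₁, hsum₁, hmem₁⟩ := map_coll hC₁good ⇑f₁ (fun _ => True)
      (fun _ _ _ _ => trivial) (fun a b _ _ hEq => f₁.injective hEq) hedge₁
    obtain ⟨hgood₂, hsum₂, hmem₂⟩ := map_coll hC₂good g (fun w => w ≠ z)
      hPz hinj₂ hedge₂
    set D₁ := C₁.image (Finset.image ⇑f₁) with hD₁
    set D₂ := C₂.image (Finset.image g) with hD₂
    have hr₁ : ∀ W ∈ D₁, ∀ u ∈ W, u ∈ Set.range ⇑f₁ := by
      intro W hW u hu
      obtain ⟨a, -, rfl⟩ := hmem₁ W hW u hu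
      exact ⟨a, rfl⟩
    have hr₂ : ∀ W ∈ D₂, ∀ u ∈ W, u ∈ Set.range ⇑f₂ := by
      intro W hW u hu
      obtain ⟨a, ha, rfl⟩ := hmem₂ W hW u hu
      exact ⟨⟨a, ha⟩, (hg a ha).symm⟩
    have hcross : ∀ A ∈ D₁, ∀ B ∈ D₂, Disjoint A B := by
      intro A hA B hB
      rw [Finset.disjoint_left]
      intro u hu hu'
      exact hdisj' u (hr₁ A hA u hu) (hr₂ B hB u hu')
    have hDdisj : Disjoint D₁ D₂ := by
      rw [Finset.disjoint_left]
      intro W hW₁ hW₂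
      have hcard := (hgood₁.2 W hW₁).2
      have hne : W.Nonempty := Finset.card_pos.mp (by omega)
      obtain ⟨u, hu⟩ := hne
      exact hdisj' u (hr₁ W hW₁ u hu) (hr₂ W hW₂ u hu)
    have hgoodU : GoodColl G (D₁ ∪ D₂) := by
      constructor
      · intro A hA B hB hAB
        rw [Finset.mem_coe, Finset.mem_union] at hA hB
        rcases hA with hA | hA <;> rcases hB with hB | hB
        · exact hgood₁.1 hA hB hAB
        · exact hcross A hA B hB
        · exact (hcross B hB A hA).symm
        · exact hgood₂.1 hA hB hAB
      · intro W hW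
        rcases Finset.mem_union.mp hW with hW | hW
        · exact hgood₁.2 W hW
        · exact hgood₂.2 W hW
    have hSU : (Sval (D₁ ∪ D₂) : ℝ) = (Sval C₁ : ℝ) + (Sval C₂ : ℝ) := by
      have hU : Sval (D₁ ∪ D₂) = Sval D₁ + Sval D₂ := Finset.sum_union hDdisj
      rw [hU, hsum₁, hsum₂]; push_cast; ring
    have htot : 2 + ((Nat.card V : ℝ) - 1) / 4 ≤ (Sval (D₁ ∪ D₂) : ℝ) := by
      rw [hSU, hn]; linarith
    refine ⟨?_, ?_, ?_⟩
    · intro v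
      obtain ⟨C', hgood', havoid', hsum'⟩ := erase_step hgoodU v
      exact ⟨C', hgood', havoid', by linarith⟩
    · intro a b hab
      obtain ⟨C', hgood', havoid', hsum'⟩ := erase_step hgoodU a
      exact ⟨C', hgood', fun W hW hm => havoid' W hW hm.1, by linarith⟩
    · intro _
      exact ⟨D₁ ∪ D₂, hgoodU, htot⟩

end AuxT

/-- If `G ≠ K₅` is 5-Ore, then `T(G) ≥ 2 + (|V(G)|-1)/4`. -/
theorem stmt_2 {V : Type} [Fintype V] (G : SimpleGraph V)
    (h5 : Is5Ore G) (hK : ¬ IsK5 G) :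
    (TT G : ℝ) ≥ 2 + ((Nat.card V : ℝ) - 1) / 4 := by
  obtain ⟨C, hgood, hsum⟩ := (ore_main h5).2.2 hK
  have hT : Sval C ≤ TT G := sval_le_TT G hgood
  have hT' : (Sval C : ℝ) ≤ (TT G : ℝ) := Nat.cast_le.mpr hT
  linarith

end Postle
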